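/- Let a probability distribution over permutations of n distinctly-valued items be inversion-monotone: whenever permutation σ̃ is obtained from σ by swapping two items at positions i < j with v_{σ_i} > v_{σ_j}, then P[σ] ≥ P[σ̃]. Then for any status vector s with s_i = s_j (i < j), the posterior expected value satisfies E[v_{σ_i} | s] ≥ E[v_{σ_j} | s]; hence the firm's optimal choice is always the first free item or the first busy item. -/
import Mathlib


open Finset

/-- Let a probability distribution `P` over permutations of `n`
distinctly-valued items (values `v`, strictly descending in item index, free
probability `p ∘ v` weakly decreasing in value) be inversion-monotone:
whenever `σ̃` is obtained from `σ` by swapping two positions `i < j` with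
`v (σ i) > v (σ j)`, then `P σ ≥ P σ̃`.  Then for any status vector `s` with
`s i = s j` (`i < j`), the posterior expected value at rank `i` is at least
that at rank `j`; hence (dividing by the busy penalty `γ ≥ 1` when busy) the
firm's optimal choice is always the first free item or the first busy item. -/
theorem stmt6
    (n : ℕ) (v : Fin n → ℝ) (p : ℝ → ℝ) (γ : ℝ)
    (P : Equiv.Perm (Fin n) → ℝ) (s : Fin n → Bool) (L : Equiv.Perm (Fin n) → ℝ)
    (hv : StrictAnti v) (hvpos : ∀ m, 0 < v m)
    (hp01 : ∀ x, 0 ≤ p x ∧ p x ≤ 1)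
    (hpanti : ∀ a b : ℝ, a ≤ b → p b ≤ p a)
    (hγ : 1 ≤ γ)
    (hPnonneg : ∀ σ, 0 ≤ P σ)
    (hinv : ∀ (σ : Equiv.Perm (Fin n)) (i j : Fin n), i < j →
      v (σ j) < v (σ i) → P (σ * Equiv.swap i j) ≤ P σ)
    (hL : ∀ σ, L σ =
      ∏ m : Fin n, (if s m then p (v (σ m)) else 1 - p (v (σ m))))
    (hZ : 0 < ∑ σ : Equiv.Perm (Fin n), L σ * P σ)
    (i j : Fin n) (hij : i < j) (hs : s i = s j) :
    ((∑ σ : Equiv.Perm (Fin n), L σ * P σ * v (σ i)) /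
          (∑ σ : Equiv.Perm (Fin n), L σ * P σ) ≥
        (∑ σ : Equiv.Perm (Fin n), L σ * P σ * v (σ j)) /
          (∑ σ : Equiv.Perm (Fin n), L σ * P σ)) ∧
      ((∑ σ : Equiv.Perm (Fin n), L σ * P σ * v (σ i)) /
            (∑ σ : Equiv.Perm (Fin n), L σ * P σ) / (if s i then 1 else γ) ≥
        (∑ σ : Equiv.Perm (Fin n), L σ * P σ * v (σ j)) /
            (∑ σ : Equiv.Perm (Fin n), L σ * P σ) / (if s j then 1 else γ)) := by

  have hij' : i ≠ j := ne_of_lt hij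
  set e := Equiv.swap i j with he
  -- L is invariant under σ ↦ σ * e
  have hLswap : ∀ σ : Equiv.Perm (Fin n), L (σ * e) = L σ := by
    intro σ
    rw [hL, hL]
    refine Fintype.prod_equiv e _ _ ?_
    intro m
    have hse : s (e m) = s m := by
      rcases eq_or_ne m i with rfl | hmi
      · simp [he, Equiv.swap_apply_left, hs]
      rcases eq_or_ne m j with rfl | hmj
      · simp [he, Equiv.swap_apply_right, hs]
      · simp [he, Equiv.swap_apply_of_ne_of_ne hmi hmj]
    simp [Equiv.Perm.mul_apply, hse]
  have hLnonneg : ∀ σ, 0 ≤ L σ := by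
    intro σ
    rw [hL]
    apply Finset.prod_nonneg
    intro m _
    split
    · exact (hp01 _).1
    · linarith [(hp01 (v (σ m))).2]
  -- key: the difference sum is nonneg
  have key : 0 ≤ ∑ σ : Equiv.Perm (Fin n), L σ * P σ * (v (σ i) - v (σ j)) := by
    have hterm : ∀ σ : Equiv.Perm (Fin n),
        0 ≤ L σ * P σ * (v (σ i) - v (σ j)) +
            L (σ * e) * P (σ * e) * (v ((σ * e) i) - v ((σ * e) j)) := by
      intro σ
      have hei : (σ * e) i = σ j := by simp [he, Equiv.Perm.mul_apply]
      have hej : (σ * e) j = σ i := by simp [he, Equiv.Perm.mul_apply]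
      rw [hei, hej, hLswap]
      have hrw : L σ * P σ * (v (σ i) - v (σ j)) +
          L σ * P (σ * e) * (v (σ j) - v (σ i)) =
          L σ * ((P σ - P (σ * e)) * (v (σ i) - v (σ j))) := by ring
      rw [hrw]
      apply mul_nonneg (hLnonneg σ)
      rcases lt_trichotomy (v (σ i)) (v (σ j)) with hlt | heq | hgt
      · have h2 : P σ ≤ P (σ * e) := by
          have := hinv (σ * e) i j hij (by rw [hei, hej]; exact hlt)
          have hee : σ * e * e = σ := by
            rw [mul_assoc, he, Equiv.swap_mul_self, mul_one]
          rwa [hee] at this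
        nlinarith
      · have : σ i = σ j := hv.injective heq
        exact absurd (σ.injective this) hij'
      · have h2 : P (σ * e) ≤ P σ := hinv σ i j hij hgt
        exact mul_nonneg (by linarith) (by linarith)
    have hbij : (∑ σ : Equiv.Perm (Fin n), L σ * P σ * (v (σ i) - v (σ j))) =
        ∑ σ : Equiv.Perm (Fin n),
          L (σ * e) * P (σ * e) * (v ((σ * e) i) - v ((σ * e) j)) := by
      exact (Fintype.sum_equiv (Equiv.mulRight e) _ _ (fun σ => rfl)).symm
    have h2 : 0 ≤ 2 * ∑ σ : Equiv.Perm (Fin n), L σ * P σ * (v (σ i) - v (σ j)) := by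
      have : (0:ℝ) ≤ ∑ σ : Equiv.Perm (Fin n), (L σ * P σ * (v (σ i) - v (σ j)) + L (σ * e) * P (σ * e) * (v ((σ * e) i) - v ((σ * e) j))) := Finset.sum_nonneg (fun σ _ => hterm σ)
      rw [Finset.sum_add_distrib] at this
      rw [two_mul]
      nlinarith [hbij]
    linarith
  have hle : (∑ σ : Equiv.Perm (Fin n), L σ * P σ * v (σ j)) ≤
      ∑ σ : Equiv.Perm (Fin n), L σ * P σ * v (σ i) := by
    have := key
    simp_rw [mul_sub] at this
    rw [Finset.sum_sub_distrib] at this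
    linarith
  constructor
  · exact div_le_div_of_nonneg_right hle hZ.le |>.ge
  · rw [hs]
    have hc : 0 < (if s j then (1:ℝ) else γ) := by
      split
      · norm_num
      · linarith
    exact (div_le_div_of_nonneg_right (div_le_div_of_nonneg_right hle hZ.le) hc.le).ge
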